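/- Nominal closed-loop characteristic polynomial: For all k1, k2, k3, g1, g2, g3, g4 ∈ ℝ, the characteristic polynomial of the nominal closed-loop matrix A_CL(0,k,g) (i.e., A_CL with a1 = a2 = a3 = 0) equals X^7 + q̂6·X^6 + q̂5·X^5 + q̂4·X^4 + q̂3·X^3 + q̂2·X^2 + q̂1·X + q̂0, where q̂6 = g1 + k3; q̂5 = g2 + k2 + g1·k3; q̂4 = g3 + k1 + g1·k2 + g2·k3; q̂3 = g4 + g1·k1 + g2·k2 + g3·k3; q̂2 = g2·k1 + g3·k2 + g4·k3; q̂1 = g3·k1 + g4·k2; q̂0 = g4·k1. -/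

import Mathlib

open Polynomial

/-- The 7×7 closed-loop matrix of the third-order plant under linear ADRC (case b̂ = b). -/
def Acl (a1 a2 a3 k1 k2 k3 g1 g2 g3 g4 : ℝ) : Matrix (Fin 7) (Fin 7) ℝ :=
  !![0, 1, 0, 0, 0, 0, 0;
     0, 0, 1, 0, 0, 0, 0;
     a1 - k1, a2 - k2, a3 - k3, -k1, -k2, -k3, -1;
     0, 0, 0, -g1, 1, 0, 0;
     0, 0, 0, -g2, 0, 1, 0;
     -a1, -a2, -a3, -g3, 0, 0, 1;
     0, 0, 0, -g4, 0, 0, 0]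


open Matrix in
lemma charA_adrc (k1 k2 k3 : ℝ) :
    (!![0, 1, 0; 0, 0, 1; -k1, -k2, -k3] : Matrix (Fin 3) (Fin 3) ℝ).charpoly
      = X ^ 3 + C k3 * X ^ 2 + C k2 * X + C k1 := by
  rw [Matrix.charpoly, Matrix.det_fin_three]
  simp [charmatrix_apply, Matrix.one_apply]
  ring

open Matrix in
set_option maxHeartbeats 1600000 in
lemma charD_adrc (g1 g2 g3 g4 : ℝ) :
    (!![-g1, 1, 0, 0; -g2, 0, 1, 0; -g3, 0, 0, 1; -g4, 0, 0, 0] :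
        Matrix (Fin 4) (Fin 4) ℝ).charpoly
      = X ^ 4 + C g1 * X ^ 3 + C g2 * X ^ 2 + C g3 * X + C g4 := by
  have hc : charmatrix (!![-g1, 1, 0, 0; -g2, 0, 1, 0; -g3, 0, 0, 1; -g4, 0, 0, 0] :
        Matrix (Fin 4) (Fin 4) ℝ) =
      !![X + C g1, -1, 0, 0; C g2, X, -1, 0; C g3, 0, X, -1; C g4, 0, 0, X] := by
    ext i j
    fin_cases i <;> fin_cases j <;>
      simp [charmatrix_apply, Matrix.one_apply, Matrix.vecHead, Matrix.vecTail]
  rw [Matrix.charpoly, hc]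
  simp [Matrix.det_succ_row_zero, Fin.sum_univ_succ, Fin.succAbove,
    Matrix.submatrix_apply]
  ring

set_option maxRecDepth 8000 in
/-- Nominal closed-loop characteristic polynomial: explicit formula for the characteristic
polynomial of the nominal closed-loop matrix. -/
theorem adrc_nominal_charpoly (k1 k2 k3 g1 g2 g3 g4 : ℝ) :
    (Acl 0 0 0 k1 k2 k3 g1 g2 g3 g4).charpoly =
      X ^ 7 + C (g1 + k3) * X ^ 6 + C (g2 + k2 + g1 * k3) * X ^ 5
        + C (g3 + k1 + g1 * k2 + g2 * k3) * X ^ 4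
        + C (g4 + g1 * k1 + g2 * k2 + g3 * k3) * X ^ 3
        + C (g2 * k1 + g3 * k2 + g4 * k3) * X ^ 2
        + C (g3 * k1 + g4 * k2) * X
        + C (g4 * k1) := by
  have h0 : Acl 0 0 0 k1 k2 k3 g1 g2 g3 g4 =
      !![0, 1, 0, 0, 0, 0, 0;
         0, 0, 1, 0, 0, 0, 0;
         -k1, -k2, -k3, -k1, -k2, -k3, -1;
         0, 0, 0, -g1, 1, 0, 0;
         0, 0, 0, -g2, 0, 1, 0;
         0, 0, 0, -g3, 0, 0, 1;
         0, 0, 0, -g4, 0, 0, 0] := by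
    unfold Acl; norm_num
  have hm : Acl 0 0 0 k1 k2 k3 g1 g2 g3 g4 =
      (Matrix.reindex finSumFinEquiv finSumFinEquiv)
        (Matrix.fromBlocks
          (!![0, 1, 0; 0, 0, 1; -k1, -k2, -k3])
          (!![0,0,0,0; 0,0,0,0; -k1,-k2,-k3,-1])
          0
          (!![-g1, 1, 0, 0; -g2, 0, 1, 0; -g3, 0, 0, 1; -g4, 0, 0, 0])) := by
    rw [h0]; ext i j
    fin_cases i <;> fin_cases j <;> rfl
  rw [hm, Matrix.charpoly_reindex, Matrix.charpoly_fromBlocks_zero₂₁,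
    charA_adrc, charD_adrc]
  simp only [C_add, C_mul]
  ring
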